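/- arXiv:1703.10917 — 2 statements merged into one kernel-verified Lean document; each statement's English description precedes it below -/
import Mathlib

section
/- Let V be a 2g-dimensional vector space over 𝔽₂ with a nondegenerate alternating bilinear form, and suppose c₁, ..., c_{2g} is a basis of V such that ⟨c_i, c_j⟩ = 1 for all i ≠ j. Define t_i ∈ End(V) by t_i(v) = ⟨v, c_i⟩c_i. Then the set {t_i : 1 ≤ i ≤ 2g} ∪ {[t_i, t_j] : 1 ≤ i < j ≤ 2g} is a basis of the Lie algebra 𝔰𝔭(V) over 𝔽₂. -/
/-- The symplectic Lie algebra of a bilinear form `B` over `𝔽₂`, as a submodule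
of endomorphisms: those `u` with `B (u v) w + B v (u w) = 0` for all `v, w`. -/
def spSubmodule {V : Type*} [AddCommGroup V] [Module (ZMod 2) V]
    (B : V →ₗ[ZMod 2] V →ₗ[ZMod 2] ZMod 2) :
    Submodule (ZMod 2) (V →ₗ[ZMod 2] V) where
  carrier := {u | ∀ v w : V, B (u v) w + B v (u w) = 0}
  add_mem' := by
    intro u u' hu hu' v w
    have h1 := hu v w
    have h2 := hu' v w
    simp only [LinearMap.add_apply, map_add, LinearMap.add_apply] at *
    linear_combination h1 + h2
  zero_mem' := by intro v w; simp
  smul_mem' := by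
    intro a u hu v w
    have h := hu v w
    simp only [LinearMap.smul_apply, map_smul, LinearMap.smul_apply, smul_eq_mul] at *
    linear_combination a * h


theorem double_sum_split' {M : Type*} [AddCommMonoid M] {n : ℕ} (f : Fin n → Fin n → M) :
    (∑ i, ∑ j, f i j) =
      (∑ i, f i i) + ∑ i, ∑ j, (if i < j then f i j + f j i else 0) := by
  have h1 : ∀ i j : Fin n, f i j =
      (if i = j then f i j else 0) + ((if i < j then f i j else 0) + (if j < i then f i j else 0)) := by
    intro i j
    rcases lt_trichotomy i j with h | h | h
    · simp [h, ne_of_lt h, lt_asymm h]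
    · simp [h, lt_irrefl]
    · simp [h, (ne_of_lt h).symm, lt_asymm h]
  calc (∑ i, ∑ j, f i j)
      = ∑ i, ∑ j, ((if i = j then f i j else 0) +
          ((if i < j then f i j else 0) + (if j < i then f i j else 0))) :=
        Finset.sum_congr rfl fun i _ => Finset.sum_congr rfl fun j _ => h1 i j
    _ = (∑ i, ∑ j, if i = j then f i j else 0) +
          ((∑ i, ∑ j, if i < j then f i j else 0) + (∑ i, ∑ j, if j < i then f i j else 0)) := by
        simp [Finset.sum_add_distrib]
    _ = (∑ i, f i i) +
          ((∑ i, ∑ j, if i < j then f i j else 0) + (∑ i, ∑ j, if i < j then f j i else 0)) := by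
        rw [Finset.sum_comm (f := fun i j => if j < i then f i j else 0)]
        simp [Finset.sum_ite_eq]
    _ = (∑ i, f i i) + (∑ i, ∑ j, if i < j then f i j + f j i else 0) := by
        rw [← Finset.sum_add_distrib]
        refine congrArg _ (Finset.sum_congr rfl fun i _ => ?_)
        rw [← Finset.sum_add_distrib]
        refine Finset.sum_congr rfl fun j _ => ?_
        split <;> simp

/-- Let `V` be a `2g`-dimensional `𝔽₂`-vector space with
nondegenerate alternating form `B` and basis `c₁, ..., c_{2g}` with
`B (c i) (c j) = 1` for `i ≠ j`.  With `t i : v ↦ B v (c i) • c i`, the family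
consisting of the `t i` together with the commutators `[t i, t j]` for `i < j`
is a basis of the symplectic Lie algebra `𝔰𝔭(V)`. -/
theorem basis_of_sp_from_transvection_logs (g : ℕ) (hg : 1 ≤ g)
    {V : Type*} [AddCommGroup V] [Module (ZMod 2) V]
    (B : V →ₗ[ZMod 2] V →ₗ[ZMod 2] ZMod 2)
    (halt : ∀ v : V, B v v = 0)
    (hnondeg : ∀ v : V, (∀ w : V, B v w = 0) → v = 0)
    (c : Module.Basis (Fin (2 * g)) (ZMod 2) V)
    (hpair : ∀ i j : Fin (2 * g), i ≠ j → B (c i) (c j) = 1)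
    (t : Fin (2 * g) → (V →ₗ[ZMod 2] V))
    (ht : ∀ i, t i = LinearMap.smulRight (B.flip (c i)) (c i))
    (F : (Fin (2 * g) ⊕ {p : Fin (2 * g) × Fin (2 * g) // p.1 < p.2}) →
      (V →ₗ[ZMod 2] V))
    (hF : F = Sum.elim t (fun p => t p.1.1 * t p.1.2 - t p.1.2 * t p.1.1)) :
    (∀ i, F i ∈ spSubmodule B) ∧ LinearIndependent (ZMod 2) F ∧
      Submodule.span (ZMod 2) (Set.range F) = spSubmodule B := by
  classical
  have hFl : ∀ i, F (Sum.inl i) = t i := by intro i; rw [hF]; rfl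
  have hFr : ∀ q : {p : Fin (2 * g) × Fin (2 * g) // p.1 < p.2},
      F (Sum.inr q) = t q.1.1 * t q.1.2 - t q.1.2 * t q.1.1 := by intro q; rw [hF]; rfl
  have hz2 : ∀ a b : ZMod 2, a + b = 0 → a = b := by decide
  have ha2 : ∀ a : ZMod 2, a + a = 0 := by decide
  have haa : ∀ a b : ZMod 2, a * b * a = a * b := by decide
  have h20 : (2 : ZMod 2) = 0 := by decide
  have hcharV : ∀ x : V, x + x = 0 := by
    intro x
    calc x + x = (2 : ZMod 2) • x := (two_smul _ x).symm
    _ = 0 := by rw [h20, zero_smul]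
  have hcharE : ∀ x : V →ₗ[ZMod 2] V, x + x = 0 := by
    intro x
    calc x + x = (2 : ZMod 2) • x := (two_smul _ x).symm
    _ = 0 := by rw [h20, zero_smul]
  have hsubV : ∀ x y : V, x - y = x + y := fun x y => by
    rw [sub_eq_add_neg, neg_eq_of_add_eq_zero_left (hcharV y)]
  have hsym : ∀ v w : V, B v w = B w v := by
    intro v w
    have h := halt (v + w)
    simp only [map_add, LinearMap.add_apply, halt v, halt w, zero_add, add_zero] at h
    exact (hz2 _ _ h).symm
  have happ : ∀ i v, t i v = B v (c i) • c i := by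
    intro i v; rw [ht i]; simp [LinearMap.smulRight_apply, LinearMap.flip_apply]
  have hmem_t : ∀ i, t i ∈ spSubmodule B := by
    intro i v w
    simp only [happ, map_smul, LinearMap.smul_apply, smul_eq_mul]
    rw [hsym (c i) w, mul_comm (B w (c i)) (B v (c i))]
    exact ha2 _
  have hsp : ∀ u, u ∈ spSubmodule B → ∀ v w, B (u v) w = B v (u w) :=
    fun u hu v w => hz2 _ _ (hu v w)
  have hmem_comm : ∀ a, a ∈ spSubmodule B → ∀ b, b ∈ spSubmodule B →
      a * b - b * a ∈ spSubmodule B := by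
    intro a ha b hb v w
    simp only [LinearMap.sub_apply, Module.End.mul_apply, map_sub]
    rw [hsp a ha (b v) w, hsp b hb v (a w), hsp b hb (a v) w, hsp a ha v (b w)]
    ring
  -- the dual basis d
  set sV : V := ∑ i, c i with hsV
  set d : Fin (2 * g) → V := fun i => sV + c i with hd
  have hBcc : ∀ i j, B (c i) (c j) = if i = j then 0 else 1 := by
    intro i j; by_cases h : i = j
    · subst h; simp [halt]
    · simp [h, hpair i j h]
  have hBsc : ∀ j, B sV (c j) = 1 := by
    intro j
    rw [hsV, map_sum, LinearMap.sum_apply]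
    have e : ∀ i : Fin (2 * g), B (c i) (c j) = 1 + (if i = j then 1 else 0) := by
      intro i; rw [hBcc]; by_cases h : i = j
      · simp [h]; decide
      · simp [h]
    rw [Finset.sum_congr rfl fun i _ => e i, Finset.sum_add_distrib]
    have h1 : (∑ _i : Fin (2 * g), (1 : ZMod 2)) = 0 := by
      rw [Finset.sum_const, Finset.card_univ, Fintype.card_fin, nsmul_eq_mul, mul_one,
        Nat.cast_mul]
      rw [show ((2 : ℕ) : ZMod 2) = 0 by decide, zero_mul]
    rw [h1, Finset.sum_ite_eq' Finset.univ j fun _ => (1 : ZMod 2)]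
    simp
  have hBdc : ∀ i j, B (d i) (c j) = if i = j then 1 else 0 := by
    intro i j
    rw [hd]
    simp only [map_add, LinearMap.add_apply, hBsc, hBcc]
    by_cases h : i = j
    · simp [h]
    · simp [h]; decide
  have hBcd : ∀ j i, B (c j) (d i) = if i = j then 1 else 0 := fun j i => by
    rw [hsym]; exact hBdc i j
  have hsumd : (∑ i, d i) = sV := by
    rw [hd]
    rw [Finset.sum_add_distrib, Finset.sum_const, Finset.card_univ, Fintype.card_fin, ← hsV]
    rw [mul_smul, two_smul, hcharV, zero_add]
  have hrepr : ∀ v : V, (∑ i, B (c i) v • d i) = v := by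
    have hL : (∑ i, LinearMap.smulRight (B (c i)) (d i)) = (LinearMap.id : V →ₗ[ZMod 2] V) := by
      apply Module.Basis.ext c
      intro j
      rw [LinearMap.sum_apply]
      simp only [LinearMap.smulRight_apply, LinearMap.id_apply]
      have e : ∀ i : Fin (2 * g), B (c i) (c j) • d i = d i + (if i = j then d i else 0) := by
        intro i; rw [hBcc]; by_cases h : i = j
        · rw [if_pos h, if_pos h, zero_smul, hcharV]
        · rw [if_neg h, if_neg h, one_smul, add_zero]
      rw [Finset.sum_congr rfl fun i _ => e i, Finset.sum_add_distrib, hsumd,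
        Finset.sum_ite_eq' Finset.univ j d, if_pos (Finset.mem_univ j)]
      rw [hd]
      show sV + (sV + c j) = c j
      rw [← add_assoc, hcharV, zero_add]
    intro v
    have := congrArg (fun L : V →ₗ[ZMod 2] V => L v) hL
    simpa [LinearMap.sum_apply] using this
  -- values on the dual basis
  have htval : ∀ i l, t i (d l) = if l = i then c i else 0 := by
    intro i l; rw [happ, hBdc]
    by_cases h : l = i <;> simp [h]
  have hcval : ∀ i j : Fin (2 * g), i ≠ j → ∀ l,
      (t i * t j - t j * t i) (d l) =
        (if l = j then c i else 0) - (if l = i then c j else 0) := by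
    intro i j hij l
    rw [LinearMap.sub_apply, Module.End.mul_apply, Module.End.mul_apply, htval, htval]
    by_cases h1 : l = j <;> by_cases h2 : l = i
    · exact absurd (h2.symm.trans h1) hij
    · simp [h1, h2, happ, hBcc, Ne.symm hij]
    · simp [h1, h2, happ, hBcc, hij]
    · simp [h1, h2]
  -- membership
  have hFmem : ∀ i, F i ∈ spSubmodule B := by
    intro i
    rcases i with i | q
    · rw [hFl]; exact hmem_t i
    · rw [hFr]; exact hmem_comm _ (hmem_t _) _ (hmem_t _)
  refine ⟨hFmem, ?_, ?_⟩
  · -- linear independence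
    rw [Fintype.linearIndependent_iff]
    intro γ hγ
    have hkey : ∀ k l : Fin (2 * g),
        (∑ i : Fin (2 * g), γ (Sum.inl i) * B (d k) (t i (d l))) +
        (∑ q : {p : Fin (2 * g) × Fin (2 * g) // p.1 < p.2},
          γ (Sum.inr q) * B (d k) ((t q.1.1 * t q.1.2 - t q.1.2 * t q.1.1) (d l))) = 0 := by
      intro k l
      have h := congrArg (fun u : V →ₗ[ZMod 2] V => B (d k) (u (d l))) hγ
      simp only [LinearMap.sum_apply, LinearMap.smul_apply, map_sum, map_smul, smul_eq_mul,
        LinearMap.zero_apply, map_zero] at h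
      rw [Fintype.sum_sum_type] at h
      simpa only [hFl, hFr] using h
    intro i
    rcases i with k | q
    · have h := hkey k k
      have e1 : ∀ i : Fin (2 * g),
          γ (Sum.inl i) * B (d k) (t i (d k)) = if i = k then γ (Sum.inl k) else 0 := by
        intro i
        rw [htval]
        by_cases h' : k = i
        · subst h'; simp [hBdc]
        · simp [h', Ne.symm h']
      have e2 : ∀ q' : {p : Fin (2 * g) × Fin (2 * g) // p.1 < p.2},
          γ (Sum.inr q') * B (d k) ((t q'.1.1 * t q'.1.2 - t q'.1.2 * t q'.1.1) (d k)) = 0 := by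
        intro q'
        rw [hcval _ _ (ne_of_lt q'.2), map_sub, apply_ite (B (d k)), apply_ite (B (d k)),
          map_zero, hBdc, hBdc]
        split_ifs <;> simp
      rw [Finset.sum_congr rfl fun i _ => e1 i,
        Finset.sum_ite_eq' Finset.univ k fun _ => γ (Sum.inl k), if_pos (Finset.mem_univ k),
        Finset.sum_eq_zero fun q' _ => e2 q', add_zero] at h
      exact h
    · obtain ⟨⟨k, l⟩, hkl⟩ := q
      have h := hkey k l
      have e1 : ∀ i : Fin (2 * g), γ (Sum.inl i) * B (d k) (t i (d l)) = 0 := by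
        intro i
        rw [htval]
        by_cases h' : l = i
        · rw [if_pos h', hBdc, if_neg (ne_of_lt (h' ▸ hkl)), mul_zero]
        · rw [if_neg h', map_zero, mul_zero]
      have e2 : (∑ q' : {p : Fin (2 * g) × Fin (2 * g) // p.1 < p.2},
          γ (Sum.inr q') * B (d k) ((t q'.1.1 * t q'.1.2 - t q'.1.2 * t q'.1.1) (d l)))
          = γ (Sum.inr ⟨(k, l), hkl⟩) := by
        rw [Finset.sum_eq_single_of_mem (⟨(k, l), hkl⟩ :
            {p : Fin (2 * g) × Fin (2 * g) // p.1 < p.2}) (Finset.mem_univ _)]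
        · rw [hcval _ _ (ne_of_lt hkl) l, if_pos rfl, if_neg (Ne.symm (ne_of_lt hkl)),
            sub_zero, hBdc, if_pos rfl, mul_one]
        · intro q' _ hne
          rw [hcval _ _ (ne_of_lt q'.2) l, map_sub, apply_ite (B (d k)), apply_ite (B (d k)),
            map_zero, hBdc, hBdc]
          have hz0 : (if l = q'.1.2 then (if k = q'.1.1 then (1 : ZMod 2) else 0) else 0) = 0 := by
            by_cases a1 : l = q'.1.2
            · rw [if_pos a1,
                if_neg (fun a2 => hne (Subtype.ext (Prod.ext_iff.mpr ⟨a2.symm, a1.symm⟩)))]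
            · rw [if_neg a1]
          have hz1 : (if l = q'.1.1 then (if k = q'.1.2 then (1 : ZMod 2) else 0) else 0) = 0 := by
            by_cases b1 : l = q'.1.1
            · rw [if_pos b1, if_neg ?_]
              intro b2
              have hlk : l < k := by rw [b1, b2]; exact q'.2
              exact absurd hlk (lt_asymm hkl)
            · rw [if_neg b1]
          rw [hz0, hz1, sub_zero, mul_zero]
      rw [Finset.sum_eq_zero fun i _ => e1 i, e2, zero_add] at h
      exact h
  · -- spanning
    apply le_antisymm
    · exact Submodule.span_le.mpr (by rintro x ⟨i, rfl⟩; exact hFmem i)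
    intro u hu
    set S : Fin (2 * g) → Fin (2 * g) → ZMod 2 := fun i j => B (c i) (u (c j)) with hS
    have hSsym : ∀ i j, S i j = S j i := by
      intro i j
      rw [hS]
      calc B (c i) (u (c j)) = B (u (c i)) (c j) := (hsp u hu (c i) (c j)).symm
        _ = B (c j) (u (c i)) := hsym _ _
    set P : Fin (2 * g) → Fin (2 * g) → (V →ₗ[ZMod 2] V) :=
      fun i j => LinearMap.smulRight (B.flip (d j)) (d i) with hP
    have hPapp : ∀ i j v, P i j v = B v (d j) • d i := by
      intro i j v; rw [hP]; simp [LinearMap.smulRight_apply, LinearMap.flip_apply]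
    set rmap : V → V → (V →ₗ[ZMod 2] V) :=
      fun v w => LinearMap.smulRight (B.flip w) v + LinearMap.smulRight (B.flip v) w with hrmap
    have hrapp : ∀ v w x, rmap v w x = B x w • v + B x v • w := by
      intro v w x; rw [hrmap]
      simp [LinearMap.smulRight_apply, LinearMap.flip_apply]
    -- commutators are the rmap of basis vectors
    have hcomm_eq : ∀ i j : Fin (2 * g), i ≠ j →
        t i * t j - t j * t i = rmap (c i) (c j) := by
      intro i j hij
      apply LinearMap.ext; intro x
      rw [LinearMap.sub_apply, Module.End.mul_apply, Module.End.mul_apply, happ j x, happ i x,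
        map_smul, map_smul, happ i (c j), happ j (c i), hBcc, hBcc, if_neg (Ne.symm hij),
        if_neg hij, one_smul, one_smul, hrapp, hsubV]
    -- rmap lands in the span
    have hrcc : ∀ i j : Fin (2 * g), rmap (c i) (c j) ∈ Submodule.span (ZMod 2) (Set.range F) := by
      intro i j
      rcases lt_trichotomy i j with h | h | h
      · rw [← hcomm_eq i j (ne_of_lt h), ← hFr ⟨(i, j), h⟩]
        exact Submodule.subset_span (Set.mem_range_self _)
      · subst h
        have : rmap (c i) (c i) = 0 := by
          apply LinearMap.ext; intro x; rw [hrapp, hcharV, LinearMap.zero_apply]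
        rw [this]; exact Submodule.zero_mem _
      · have hsymm : rmap (c i) (c j) = rmap (c j) (c i) := by rw [hrmap]; exact add_comm _ _
        rw [hsymm, ← hcomm_eq j i (ne_of_lt h), ← hFr ⟨(j, i), h⟩]
        exact Submodule.subset_span (Set.mem_range_self _)
    -- bilinearity of rmap
    have hr0r : ∀ v : V, rmap v 0 = 0 := by
      intro v; apply LinearMap.ext; intro x
      rw [hrapp]; simp
    have hraddr : ∀ (v w1 w2 : V), rmap v (w1 + w2) = rmap v w1 + rmap v w2 := by
      intro v w1 w2; apply LinearMap.ext; intro x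
      simp only [hrapp, LinearMap.add_apply, map_add, add_smul, smul_add]
      abel
    have hrsmulr : ∀ (a : ZMod 2) (v w : V), rmap v (a • w) = a • rmap v w := by
      intro a v w; apply LinearMap.ext; intro x
      simp only [hrapp, LinearMap.smul_apply, map_smul, smul_add, smul_smul, smul_eq_mul,
        mul_comm]
    have hr0l : ∀ w : V, rmap 0 w = 0 := by
      intro w; apply LinearMap.ext; intro x
      rw [hrapp]; simp
    have hraddl : ∀ (v1 v2 w : V), rmap (v1 + v2) w = rmap v1 w + rmap v2 w := by
      intro v1 v2 w; apply LinearMap.ext; intro x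
      simp only [hrapp, LinearMap.add_apply, map_add, add_smul, smul_add]
      abel
    have hrsmull : ∀ (a : ZMod 2) (v w : V), rmap (a • v) w = a • rmap v w := by
      intro a v w; apply LinearMap.ext; intro x
      simp only [hrapp, LinearMap.smul_apply, map_smul, smul_add, smul_smul, smul_eq_mul,
        mul_comm]
    -- rmap v w is always in the span
    have hrmem : ∀ v w : V, rmap v w ∈ Submodule.span (ZMod 2) (Set.range F) := by
      have step1 : ∀ (i : Fin (2 * g)) (w : V),
          rmap (c i) w ∈ Submodule.span (ZMod 2) (Set.range F) := by
        intro i w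
        induction c.mem_span w using Submodule.span_induction with
        | mem x hx => obtain ⟨j, rfl⟩ := hx; exact hrcc i j
        | zero => rw [hr0r]; exact Submodule.zero_mem _
        | add x y hx hy ihx ihy => rw [hraddr]; exact Submodule.add_mem _ ihx ihy
        | smul a x hx ihx => rw [hrsmulr]; exact Submodule.smul_mem _ a ihx
      intro v w
      induction c.mem_span v using Submodule.span_induction with
      | mem x hx => obtain ⟨i, rfl⟩ := hx; exact step1 i w
      | zero => rw [hr0l]; exact Submodule.zero_mem _
      | add x y hx hy ihx ihy => rw [hraddl]; exact Submodule.add_mem _ ihx ihy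
      | smul a x hx ihx => rw [hrsmull]; exact Submodule.smul_mem _ a ihx
    -- the quadratic maps s_v are in the span
    have hsv : ∀ v : V, LinearMap.smulRight (B.flip v) v ∈
        Submodule.span (ZMod 2) (Set.range F) := by
      intro v
      induction c.mem_span v using Submodule.span_induction with
      | mem x hx =>
        obtain ⟨i, rfl⟩ := hx
        rw [← ht i, ← hFl i]
        exact Submodule.subset_span (Set.mem_range_self _)
      | zero =>
        have : LinearMap.smulRight (B.flip (0 : V)) (0 : V) = 0 := by
          apply LinearMap.ext; intro x; simp
        rw [this]; exact Submodule.zero_mem _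
      | add x y hx hy ihx ihy =>
        have : LinearMap.smulRight (B.flip (x + y)) (x + y) =
            LinearMap.smulRight (B.flip x) x + LinearMap.smulRight (B.flip y) y + rmap x y := by
          apply LinearMap.ext; intro z
          simp only [LinearMap.add_apply, LinearMap.smulRight_apply, LinearMap.flip_apply,
            hrapp, map_add, add_smul, smul_add]
          abel
        rw [this]
        exact Submodule.add_mem _ (Submodule.add_mem _ ihx ihy) (hrmem x y)
      | smul a x hx ihx =>
        have : LinearMap.smulRight (B.flip (a • x)) (a • x) =
            a • LinearMap.smulRight (B.flip x) x := by
          apply LinearMap.ext; intro z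
          simp only [LinearMap.smul_apply, LinearMap.smulRight_apply, LinearMap.flip_apply,
            map_smul, smul_smul, smul_eq_mul]
          rw [haa]
        rw [this]; exact Submodule.smul_mem _ a ihx
    -- P i i is s_{d i}
    have hPii : ∀ i, P i i ∈ Submodule.span (ZMod 2) (Set.range F) := fun i => hsv (d i)
    have hPr : ∀ i j, P i j + P j i = rmap (d i) (d j) := by intro i j; rw [hP, hrmap]
    -- the decomposition of u
    have hclaim : u = ∑ i, ∑ j, S i j • P i j := by
      apply Module.Basis.ext c
      intro k
      rw [LinearMap.sum_apply]
      simp only [LinearMap.sum_apply, LinearMap.smul_apply]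
      have e : ∀ i j, S i j • P i j (c k) = if j = k then S i k • d i else 0 := by
        intro i j; rw [hPapp, hBcd k j]
        by_cases h : j = k
        · subst h; simp
        · simp [h]
      calc u (c k) = ∑ i, B (c i) (u (c k)) • d i := (hrepr (u (c k))).symm
        _ = ∑ i, ∑ j, S i j • P i j (c k) := by
            refine Finset.sum_congr rfl fun i _ => ?_
            rw [Finset.sum_congr rfl fun j _ => e i j,
              Finset.sum_ite_eq' Finset.univ k fun _ => S i k • d i, if_pos (Finset.mem_univ k)]
    rw [hclaim, double_sum_split' (f := fun i j => S i j • P i j)]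
    apply Submodule.add_mem
    · exact Submodule.sum_mem _ fun i _ => Submodule.smul_mem _ _ (hPii i)
    · refine Submodule.sum_mem _ fun i _ => Submodule.sum_mem _ fun j _ => ?_
      by_cases h : i < j
      · rw [if_pos h, hSsym j i, ← smul_add, hPr]
        exact Submodule.smul_mem _ _ (hrmem (d i) (d j))
      · rw [if_neg h]; exact Submodule.zero_mem _
end

section
/- Let V be a 2g-dimensional 𝔽₂-vector space (g ≥ 2) with nondegenerate alternating form and basis c₁,...,c_{2g} with ⟨c_i,c_j⟩ = 1 for i ≠ j. Define t_i(v) = ⟨v,c_i⟩c_i. Then the 2(2g−2) operators {[t₁,t_i] : 3 ≤ i ≤ 2g} ∪ {[t₂,t_i] : 3 ≤ i ≤ 2g} are linearly independent over 𝔽₂. -/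
/-- Let `V` be a `2g`-dimensional `𝔽₂`-space (`g ≥ 2`) with
nondegenerate alternating form `B` and basis `c₁, ..., c_{2g}` pairing to `1`
pairwise, and `t_i : v ↦ B v (c i) • c i`.  The `2(2g−2)` commutators
`[t₁, t_i]` and `[t₂, t_i]` for `3 ≤ i ≤ 2g` are linearly independent. -/
theorem commutators_linearIndependent (g : ℕ) (hg : 2 ≤ g)
    {V : Type*} [AddCommGroup V] [Module (ZMod 2) V]
    (B : V →ₗ[ZMod 2] V →ₗ[ZMod 2] ZMod 2)
    (halt : ∀ v : V, B v v = 0)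
    (hnondeg : ∀ v : V, (∀ w : V, B v w = 0) → v = 0)
    (c : Module.Basis (Fin (2 * g)) (ZMod 2) V)
    (hpair : ∀ i j : Fin (2 * g), i ≠ j → B (c i) (c j) = 1)
    (t : Fin (2 * g) → (V →ₗ[ZMod 2] V))
    (ht : ∀ i, t i = LinearMap.smulRight (B.flip (c i)) (c i)) :
    LinearIndependent (ZMod 2)
      (fun p : Fin 2 × Fin (2 * g - 2) =>
        t ⟨p.1.val, by have := p.1.isLt; omega⟩ * t ⟨p.2.val + 2, by have := p.2.isLt; omega⟩
          - t ⟨p.2.val + 2, by have := p.2.isLt; omega⟩ * t ⟨p.1.val, by have := p.1.isLt; omega⟩) := by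
  rw [Fintype.linearIndependent_iff]
  intro f hf p
  obtain ⟨a, i⟩ := p
  have ha2 : 1 - a.val < 2 * g := by omega
  have hi2 : i.val + 2 < 2 * g := by have := i.isLt; omega
  have h1 := LinearMap.congr_fun hf (c ⟨1 - a.val, ha2⟩)
  rw [LinearMap.sum_apply, LinearMap.zero_apply] at h1
  have h2 := DFunLike.congr_fun (congrArg c.repr h1) ⟨i.val + 2, hi2⟩
  rw [map_sum, map_zero] at h2
  rw [Finsupp.finset_sum_apply] at h2
  have hB : ∀ x y : Fin (2 * g), B (c x) (c y) = if x = y then 0 else 1 := by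
    intro x y
    by_cases h : x = y
    · simp [h, halt]
    · simp [h, hpair x y h]
  have hval : ∀ q ∈ Finset.univ, (c.repr ((f q • (t ⟨q.1.val, by have := q.1.isLt; omega⟩ * t ⟨q.2.val + 2, by have := q.2.isLt; omega⟩
          - t ⟨q.2.val + 2, by have := q.2.isLt; omega⟩ * t ⟨q.1.val, by have := q.1.isLt; omega⟩)) (c ⟨1 - a.val, ha2⟩))) ⟨i.val + 2, hi2⟩
        = if q = (a, i) then -f q else 0 := by
    rintro ⟨b, m⟩ -
    simp only [ht, LinearMap.smul_apply, LinearMap.sub_apply, Module.End.mul_apply,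
      LinearMap.smulRight_apply, LinearMap.flip_apply, map_smul, map_sub,
      Module.Basis.repr_self, Finsupp.smul_apply, Finsupp.sub_apply, Finsupp.single_apply,
      hB, Fin.mk.injEq, Prod.mk.injEq, smul_eq_mul]
    have hb := b.isLt
    have haa := a.isLt
    simp only [Fin.ext_iff]
    split_ifs
    all_goals try ring
    all_goals exfalso; omega
  rw [Finset.sum_congr rfl hval, Finset.sum_ite_eq' Finset.univ (a, i)] at h2
  simpa [neg_eq_zero] using h2
end
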